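/- Let T be a rooted spanning tree of weighted graph G, and suppose C is a minimum-value cut among all cuts crossing exactly two edges of T, with C = u↓ ∪ v↓ for incomparable vertices u, v. Then there exists an edge of G with one endpoint in u↓ and one endpoint in v↓; i.e., the total weight of edges between u↓ and v↓ is strictly positive. -/
import Mathlib


open scoped Classical

/-- Descendants of `v` (including `v` itself) in the rooted tree given by `parent`. -/
def desc {V : Type*} (parent : V → V) (v : V) : Set V :=
  {x | Relation.ReflTransGen (fun a b => parent a = b) x v}

/-- Ancestors of `v` (including `v` itself) in the rooted tree given by `parent`. -/
def anc {V : Type*} (parent : V → V) (v : V) : Set V :=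
  {x | Relation.ReflTransGen (fun a b => parent a = b) v x}

/-- The (undirected) edges of the rooted tree determined by `parent`. -/
def treeAdj {V : Type*} (parent : V → V) : SimpleGraph V :=
  SimpleGraph.fromRel (fun a b => parent a = b)

/-- Total weight of edges of `G` with one endpoint in `A` and the other in `B`. -/
noncomputable def betweenW {V : Type*} [Fintype V] (G : SimpleGraph V)
    (w : V → V → ℝ) (A B : Set V) : ℝ :=
  ∑ u : V, ∑ v : V, if G.Adj u v ∧ u ∈ A ∧ v ∈ B then w u v else 0

/-- The value of the cut `C` in the weighted graph `(G, w)`. -/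
noncomputable def cutValR {V : Type*} [Fintype V] (G : SimpleGraph V)
    (w : V → V → ℝ) (C : Set V) : ℝ :=
  betweenW G w C Cᶜ

/-- Paths from a common source in a functional graph are comparable. -/
lemma rtg_comparable {V : Type*} (parent : V → V) :
    ∀ {x a b : V}, Relation.ReflTransGen (fun a b => parent a = b) x a →
      Relation.ReflTransGen (fun a b => parent a = b) x b →
      Relation.ReflTransGen (fun a b => parent a = b) a b ∨
        Relation.ReflTransGen (fun a b => parent a = b) b a := by
  intro x a b h1 h2
  induction h1 using Relation.ReflTransGen.head_induction_on with
  | refl => exact Or.inl h2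
  | head hstep htail ih =>
    rcases Relation.ReflTransGen.cases_head h2 with rfl | ⟨z, hz, h2'⟩
    · exact Or.inr (Relation.ReflTransGen.head hstep htail)
    · have : z = _ := hz.symm.trans hstep
      subst this
      exact ih h2'

lemma betweenW_nonneg {V : Type*} [Fintype V] (G : SimpleGraph V)
    (w : V → V → ℝ) (hpos : ∀ a b, G.Adj a b → 0 < w a b) (A B : Set V) :
    0 ≤ betweenW G w A B := by
  refine Finset.sum_nonneg fun a _ => Finset.sum_nonneg fun b _ => ?_
  split_ifs with h
  · exact (hpos a b h.1).le
  · exact le_refl 0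

lemma betweenW_symm {V : Type*} [Fintype V] (G : SimpleGraph V)
    (w : V → V → ℝ) (hsymm : ∀ a b, w a b = w b a) (A B : Set V) :
    betweenW G w A B = betweenW G w B A := by
  unfold betweenW
  rw [Finset.sum_comm]
  refine Finset.sum_congr rfl fun a _ => Finset.sum_congr rfl fun b _ => ?_
  by_cases h : G.Adj b a ∧ b ∈ A ∧ a ∈ B
  · rw [if_pos h, if_pos ⟨h.1.symm, h.2.2, h.2.1⟩, hsymm]
  · rw [if_neg h, if_neg]
    rintro ⟨h1, h2, h3⟩
    exact h ⟨h1.symm, h3, h2⟩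

lemma betweenW_union_left {V : Type*} [Fintype V] (G : SimpleGraph V)
    (w : V → V → ℝ) {A B : Set V} (S : Set V) (h : Disjoint A B) :
    betweenW G w (A ∪ B) S = betweenW G w A S + betweenW G w B S := by
  unfold betweenW
  rw [← Finset.sum_add_distrib]
  refine Finset.sum_congr rfl fun a _ => ?_
  rw [← Finset.sum_add_distrib]
  refine Finset.sum_congr rfl fun b _ => ?_
  by_cases h1 : G.Adj a b <;> by_cases h2 : a ∈ A <;> by_cases h3 : a ∈ B <;>
      by_cases h4 : b ∈ S <;>
    simp [Set.mem_union, h1, h2, h3, h4] <;>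
    exact absurd h3 (Set.disjoint_left.mp h h2)

lemma betweenW_union_right {V : Type*} [Fintype V] (G : SimpleGraph V)
    (w : V → V → ℝ) {A B : Set V} (S : Set V) (h : Disjoint A B) :
    betweenW G w S (A ∪ B) = betweenW G w S A + betweenW G w S B := by
  unfold betweenW
  rw [← Finset.sum_add_distrib]
  refine Finset.sum_congr rfl fun a _ => ?_
  rw [← Finset.sum_add_distrib]
  refine Finset.sum_congr rfl fun b _ => ?_
  by_cases h1 : G.Adj a b <;> by_cases h2 : b ∈ A <;> by_cases h3 : b ∈ B <;>
      by_cases h4 : a ∈ S <;>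
    simp [Set.mem_union, h1, h2, h3, h4] <;>
    exact absurd h3 (Set.disjoint_left.mp h h2)

/-- If `C = u↓ ∪ v↓` (with `u, v` incomparable non-root vertices of a rooted spanning
tree of the connected positively-weighted graph `G`) has strictly smaller cut value
than both `u↓` and `v↓`, then some edge of `G` joins `u↓` and `v↓`; in particular the
total weight of edges between `u↓` and `v↓` is strictly positive. -/
theorem min_two_edge_cut_has_crossing_edge {V : Type*} [Fintype V]
    (G : SimpleGraph V) (hG : G.Connected)
    (w : V → V → ℝ) (hsymm : ∀ a b, w a b = w b a)
    (hpos : ∀ a b, G.Adj a b → 0 < w a b)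
    (parent : V → V) (r : V) (hroot : parent r = r)
    (hreach : ∀ x, Relation.ReflTransGen (fun a b => parent a = b) x r)
    (hspan : treeAdj parent ≤ G)
    (u v : V) (hu : u ≠ r) (hv : v ≠ r)
    (huv : u ∉ anc parent v) (hvu : v ∉ anc parent u)
    (hminu : cutValR G w (desc parent u ∪ desc parent v) < cutValR G w (desc parent u))
    (hminv : cutValR G w (desc parent u ∪ desc parent v) < cutValR G w (desc parent v)) :
    (∃ a ∈ desc parent u, ∃ b ∈ desc parent v, G.Adj a b)
      ∧ 0 < betweenW G w (desc parent u) (desc parent v) := by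
  set A := desc parent u with hA
  set B := desc parent v with hB
  have hdisj : Disjoint A B := by
    rw [Set.disjoint_left]
    intro x hxA hxB
    rcases rtg_comparable parent hxA hxB with h | h
    · exact hvu h
    · exact huv h
  -- complement decompositions
  have hAc : Aᶜ = (A ∪ B)ᶜ ∪ B := by
    ext x
    simp only [Set.mem_compl_iff, Set.mem_union, not_or]
    constructor
    · intro hx
      by_cases hxB : x ∈ B
      · exact Or.inr hxB
      · exact Or.inl ⟨hx, hxB⟩
    · rintro (⟨hx, _⟩ | hxB)
      · exact hx
      · exact fun hxA => Set.disjoint_left.mp hdisj hxA hxB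
  have hBc : Bᶜ = (A ∪ B)ᶜ ∪ A := by
    ext x
    simp only [Set.mem_compl_iff, Set.mem_union, not_or]
    constructor
    · intro hx
      by_cases hxA : x ∈ A
      · exact Or.inr hxA
      · exact Or.inl ⟨hxA, hx⟩
    · rintro (⟨_, hx⟩ | hxA)
      · exact hx
      · exact fun hxB => Set.disjoint_left.mp hdisj hxA hxB
  have hdisjCB : Disjoint ((A ∪ B)ᶜ) B := by
    rw [Set.disjoint_left]
    intro x hx hxB
    exact hx (Or.inr hxB)
  have hdisjCA : Disjoint ((A ∪ B)ᶜ) A := by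
    rw [Set.disjoint_left]
    intro x hx hxA
    exact hx (Or.inl hxA)
  have eA : cutValR G w A = betweenW G w A ((A ∪ B)ᶜ) + betweenW G w A B := by
    rw [cutValR, hAc, betweenW_union_right G w _ hdisjCB]
  have eB : cutValR G w B = betweenW G w B ((A ∪ B)ᶜ) + betweenW G w B A := by
    rw [cutValR, hBc, betweenW_union_right G w _ hdisjCA]
  have eC : cutValR G w (A ∪ B)
      = betweenW G w A ((A ∪ B)ᶜ) + betweenW G w B ((A ∪ B)ᶜ) := by
    rw [cutValR, betweenW_union_left G w _ hdisj]
  have hsym : betweenW G w B A = betweenW G w A B := betweenW_symm G w hsymm B A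
  have hCnonneg : 0 ≤ cutValR G w (A ∪ B) :=
    betweenW_nonneg G w hpos _ _
  have hposAB : 0 < betweenW G w A B := by linarith
  refine ⟨?_, hposAB⟩
  by_contra hno
  push_neg at hno
  have : betweenW G w A B = 0 := by
    refine Finset.sum_eq_zero fun a _ => Finset.sum_eq_zero fun b _ => ?_
    rw [if_neg]
    rintro ⟨hadj, ha, hb⟩
    exact hno a ha b hb hadj
  linarith
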